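/- Under the singular decomposition into h closed aperiodic classes with exponential ergodicity constants (each class j satisfying Δ^(j)_N(P₀) < 1 for some N ≥ 1), let p̄ be any initial distribution, and let f^(j)_p = ∑_{i∈X^(j)} p_i, f^(j)_d = ∑_{i∈X^(j)} d_i. If n_ε → ∞ and ε n_ε → t ∈ (0,∞) as ε → 0+, then for k ∈ X^(j), p_{ε,p̄,k}(n_ε) → π_{0,p̄,k} e^{-t} + π_{0,d̄,k}(1 - e^{-t}) as ε → 0+, where π_{0,p̄,k} = f^(j)_p π^(j)_{0,k} and π_{0,d̄,k} = f^(j)_d π^(j)_{0,k}. -/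

import Mathlib

open Finset Matrix Filter


private lemma rowsum_pow {m : ℕ} (M : Matrix (Fin m) (Fin m) ℝ)
    (h : ∀ i, ∑ j, M i j = 1) (n : ℕ) (i : Fin m) : ∑ j, (M ^ n) i j = 1 := by
  induction n generalizing i with
  | zero => simp [Matrix.one_apply]
  | succ n ih =>
      simp only [pow_succ, Matrix.mul_apply]
      rw [Finset.sum_comm]
      have : ∀ r, ∑ j, (M ^ n) i r * M r j = (M ^ n) i r := by
        intro r; rw [← Finset.mul_sum, h r, mul_one]
      simp only [this]
      exact ih i

private lemma keyIdentity {m : ℕ} (P₀ D : Matrix (Fin m) (Fin m) ℝ)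
    (hP₀row : ∀ i, ∑ j, P₀ i j = 1)
    (d : Fin m → ℝ) (hdsum : ∑ i, d i = 1) (hD : ∀ i j, D i j = d j)
    (p : Fin m → ℝ) (hpsum : ∑ i, p i = 1) (ε : ℝ) (n : ℕ) (k : Fin m) :
    ∑ i, p i * (((1 - ε) • P₀ + ε • D) ^ n) i k
      = (1-ε)^n * ∑ i, p i * (P₀ ^ n) i k
        + ∑ l ∈ Finset.range n, ε * (1-ε)^l * ∑ i, d i * (P₀ ^ l) i k := by
  set Pε := ((1 - ε) • P₀ + ε • D) with hPε
  have hPεrow : ∀ i, ∑ j, Pε i j = 1 := by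
    intro i
    simp only [hPε, Matrix.add_apply, Matrix.smul_apply, smul_eq_mul, hD]
    rw [Finset.sum_add_distrib, ← Finset.mul_sum, ← Finset.mul_sum, hP₀row, hdsum]
    ring
  have step : ∀ (M : Matrix (Fin m) (Fin m) ℝ) (q : Fin m → ℝ) (n : ℕ) (k : Fin m),
      ∑ i, q i * (M ^ (n+1)) i k = ∑ r, (∑ i, q i * (M ^ n) i r) * M r k := by
    intro M q n k
    simp only [pow_succ, Matrix.mul_apply, Finset.mul_sum, Finset.sum_mul]
    rw [Finset.sum_comm]
    apply Finset.sum_congr rfl; intro r _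
    apply Finset.sum_congr rfl; intro i _; ring
  have expand : ∀ r k : Fin m, Pε r k = (1-ε) * P₀ r k + ε * d k := by
    intro r k; simp [hPε, hD]
  induction n generalizing k with
  | zero => simp
  | succ n ih =>
      rw [step Pε p n k]
      have hmass : ∑ r, ∑ i, p i * (Pε ^ n) i r = 1 := by
        rw [Finset.sum_comm]
        calc ∑ i, ∑ r, p i * (Pε ^ n) i r = ∑ i, p i * ∑ r, (Pε ^ n) i r := by
              simp [Finset.mul_sum]
          _ = 1 := by simp only [rowsum_pow Pε hPεrow n]; simpa using hpsum
      have h1 : ∑ r, (∑ i, p i * (Pε ^ n) i r) * Pε r k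
          = (1-ε) * (∑ r, (∑ i, p i * (Pε ^ n) i r) * P₀ r k) + ε * d k := by
        simp only [expand]
        rw [show (∑ r, (∑ i, p i * (Pε ^ n) i r) * ((1-ε) * P₀ r k + ε * d k))
            = (1-ε) * (∑ r, (∑ i, p i * (Pε ^ n) i r) * P₀ r k)
              + (∑ r, ∑ i, p i * (Pε ^ n) i r) * (ε * d k) by
          rw [Finset.mul_sum, Finset.sum_mul, ← Finset.sum_add_distrib]
          apply Finset.sum_congr rfl; intro r _; ring]
        rw [hmass]; ring
      have h2 : ∑ r, (∑ i, p i * (Pε ^ n) i r) * P₀ r k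
          = (1-ε)^n * (∑ i, p i * (P₀ ^ (n+1)) i k)
            + ∑ l ∈ Finset.range n, ε * (1-ε)^l * (∑ i, d i * (P₀ ^ (l+1)) i k) := by
        calc ∑ r, (∑ i, p i * (Pε ^ n) i r) * P₀ r k
            = ∑ r, ((1-ε)^n * (∑ i, p i * (P₀ ^ n) i r)
                + ∑ l ∈ Finset.range n, ε * (1-ε)^l * (∑ i, d i * (P₀ ^ l) i r)) * P₀ r k := by
              apply Finset.sum_congr rfl; intro r _; rw [ih r]
          _ = (1-ε)^n * (∑ r, (∑ i, p i * (P₀ ^ n) i r) * P₀ r k)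
              + ∑ l ∈ Finset.range n, ε * (1-ε)^l * (∑ r, (∑ i, d i * (P₀ ^ l) i r) * P₀ r k) := by
              rw [Finset.mul_sum]
              rw [show ∑ l ∈ Finset.range n, ε * (1-ε)^l * (∑ r, (∑ i, d i * (P₀ ^ l) i r) * P₀ r k)
                  = ∑ r, ∑ l ∈ Finset.range n, (ε * (1-ε)^l * (∑ i, d i * (P₀ ^ l) i r)) * P₀ r k by
                rw [Finset.sum_comm]
                apply Finset.sum_congr rfl; intro l _
                rw [Finset.mul_sum]
                apply Finset.sum_congr rfl; intro r _; ring]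
              rw [← Finset.sum_add_distrib]
              apply Finset.sum_congr rfl; intro r _
              rw [add_mul, Finset.sum_mul]
              ring_nf
          _ = _ := by
              rw [← step P₀ p n k]
              apply congrArg
              apply Finset.sum_congr rfl; intro l _
              rw [← step P₀ d l k]
      have hd0 : ∑ i, d i * (1 : Matrix (Fin m) (Fin m) ℝ) i k = d k := by
        simp only [Matrix.one_apply, mul_ite, mul_one, mul_zero]
        rw [Finset.sum_ite_eq' Finset.univ k d]
        simp
      have hT : (1-ε) * (∑ l ∈ Finset.range n, ε * (1-ε)^l * (∑ i, d i * (P₀ ^ (l+1)) i k))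
          = ∑ l ∈ Finset.range n, ε * (1-ε)^(l+1) * (∑ i, d i * (P₀ ^ (l+1)) i k) := by
        rw [Finset.mul_sum]
        apply Finset.sum_congr rfl; intro l _; ring
      rw [h1, h2, Finset.sum_range_succ', mul_add, hT]
      simp only [pow_zero, one_mul, hd0]
      ring


private lemma rowsum_pow' {m : ℕ} (M : Matrix (Fin m) (Fin m) ℝ)
    (h : ∀ i, ∑ j, M i j = 1) (n : ℕ) (i : Fin m) : ∑ j, (M ^ n) i j = 1 := by
  induction n generalizing i with
  | zero => simp [Matrix.one_apply]
  | succ n ih =>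
      simp only [pow_succ, Matrix.mul_apply]
      rw [Finset.sum_comm]
      have : ∀ r, ∑ j, (M ^ n) i r * M r j = (M ^ n) i r := by
        intro r; rw [← Finset.mul_sum, h r, mul_one]
      simp only [this]
      exact ih i

private lemma nonneg_pow' {m : ℕ} (M : Matrix (Fin m) (Fin m) ℝ)
    (h : ∀ i j, 0 ≤ M i j) (n : ℕ) (i j : Fin m) : 0 ≤ (M ^ n) i j := by
  induction n generalizing i j with
  | zero =>
      by_cases hij : i = j <;> simp [pow_zero, Matrix.one_apply, hij]
  | succ n ih =>
      simp only [pow_succ, Matrix.mul_apply]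
      exact Finset.sum_nonneg fun r _ => mul_nonneg (ih i r) (h r j)

private lemma closed_pow' {m : ℕ} (M : Matrix (Fin m) (Fin m) ℝ)
    (S : Finset (Fin m)) (hc : ∀ i ∈ S, ∀ k, k ∉ S → M i k = 0)
    (n : ℕ) : ∀ i ∈ S, ∀ k, k ∉ S → (M ^ n) i k = 0 := by
  induction n with
  | zero =>
      intro i hi k hk
      have : i ≠ k := fun e => hk (e ▸ hi)
      simp [pow_zero, Matrix.one_apply, this]
  | succ n ih =>
      intro i hi k hk
      simp only [pow_succ, Matrix.mul_apply]
      apply Finset.sum_eq_zero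
      intro r _
      by_cases hr : r ∈ S
      · rw [hc r hr k hk, mul_zero]
      · rw [ih i hi r hr, zero_mul]

private lemma ergodic {m : ℕ} (P₀ : Matrix (Fin m) (Fin m) ℝ)
    (hnn : ∀ i j, 0 ≤ P₀ i j) (hrow : ∀ i, ∑ j, P₀ i j = 1)
    (S : Finset (Fin m)) (hSne : S.Nonempty)
    (hclosed : ∀ i ∈ S, ∀ k, k ∉ S → P₀ i k = 0)
    (N : ℕ) (hN : 1 ≤ N)
    (hQ : ∀ r ∈ S, ∀ k ∈ S, 0 < ∑ i ∈ S, min ((P₀ ^ N) r i) ((P₀ ^ N) k i))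
    (π : Fin m → ℝ) (hπnn : ∀ k, 0 ≤ π k) (hπsum : ∑ k ∈ S, π k = 1)
    (hπstat : ∀ k ∈ S, ∑ r ∈ S, π r * P₀ r k = π k)
    (k : Fin m) (hk : k ∈ S) (r : Fin m) (hr : r ∈ S) :
    Tendsto (fun n : ℕ => (P₀ ^ n) r k) atTop (nhds (π k)) := by
  -- restricted row sums are 1
  have rowS : ∀ (n : ℕ), ∀ i ∈ S, ∑ i' ∈ S, (P₀ ^ n) i i' = 1 := by
    intro n i hi
    rw [Finset.sum_subset (Finset.subset_univ S)
      (fun x _ hx => closed_pow' P₀ S hclosed n i hi x hx)]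
    exact rowsum_pow' P₀ hrow n i
  -- restricted entry expansion for powers: (P₀^(N+n)) r k = ∑_{i∈S} (P₀^N) r i (P₀^n) i k
  have entry : ∀ (a b : ℕ), ∀ r ∈ S,
      (P₀ ^ (a + b)) r k = ∑ i ∈ S, (P₀ ^ a) r i * (P₀ ^ b) i k := by
    intro a b r hrS
    rw [pow_add, Matrix.mul_apply]
    symm
    apply Finset.sum_subset (Finset.subset_univ S)
    intro x _ hx
    rw [closed_pow' P₀ S hclosed a r hrS x hx, zero_mul]
  -- stationarity for powers
  have stat_pow : ∀ (n : ℕ), ∀ k' ∈ S, ∑ r' ∈ S, π r' * (P₀ ^ n) r' k' = π k' := by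
    intro n
    induction n with
    | zero =>
        intro k' hk'
        simp only [pow_zero, Matrix.one_apply, mul_ite, mul_one, mul_zero]
        rw [Finset.sum_ite_eq' S k' π]
        simp [hk']
    | succ n ih =>
        intro k' hk'
        have expand : ∀ r' ∈ S, (P₀ ^ (n+1)) r' k' = ∑ i ∈ S, P₀ r' i * (P₀ ^ n) i k' := by
          intro r' hr'
          rw [pow_succ']
          rw [Matrix.mul_apply]
          symm
          apply Finset.sum_subset (Finset.subset_univ S)
          intro x _ hx
          rw [hclosed r' hr' x hx, zero_mul]
        calc ∑ r' ∈ S, π r' * (P₀ ^ (n+1)) r' k'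
            = ∑ r' ∈ S, ∑ i ∈ S, π r' * (P₀ r' i * (P₀ ^ n) i k') := by
              apply Finset.sum_congr rfl; intro r' hr'
              rw [expand r' hr', Finset.mul_sum]
          _ = ∑ i ∈ S, (∑ r' ∈ S, π r' * P₀ r' i) * (P₀ ^ n) i k' := by
              rw [Finset.sum_comm]
              apply Finset.sum_congr rfl; intro i _
              rw [Finset.sum_mul]
              apply Finset.sum_congr rfl; intro r' _; ring
          _ = ∑ i ∈ S, π i * (P₀ ^ n) i k' := by
              apply Finset.sum_congr rfl; intro i hi
              rw [hπstat i hi]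
          _ = π k' := ih k' hk'
  -- sup and inf
  set Mx : ℕ → ℝ := fun n => S.sup' hSne (fun r => (P₀ ^ n) r k) with hMx
  set mn : ℕ → ℝ := fun n => S.inf' hSne (fun r => (P₀ ^ n) r k) with hmn
  have hub : ∀ n, ∀ r ∈ S, (P₀ ^ n) r k ≤ Mx n := fun n r hrS => Finset.le_sup' (fun r => (P₀ ^ n) r k) hrS
  have hlb : ∀ n, ∀ r ∈ S, mn n ≤ (P₀ ^ n) r k := fun n r hrS => Finset.inf'_le (fun r => (P₀ ^ n) r k) hrS
  -- convex combination bounds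
  have convex_ub : ∀ (n : ℕ) (w : Fin m → ℝ), (∀ i ∈ S, 0 ≤ w i) → (∑ i ∈ S, w i = 1) →
      ∑ i ∈ S, w i * (P₀ ^ n) i k ≤ Mx n := by
    intro n w hw hw1
    calc ∑ i ∈ S, w i * (P₀ ^ n) i k ≤ ∑ i ∈ S, w i * Mx n := by
          apply Finset.sum_le_sum
          intro i hi
          exact mul_le_mul_of_nonneg_left (hub n i hi) (hw i hi)
      _ = Mx n := by rw [← Finset.sum_mul, hw1, one_mul]
  have convex_lb : ∀ (n : ℕ) (w : Fin m → ℝ), (∀ i ∈ S, 0 ≤ w i) → (∑ i ∈ S, w i = 1) →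
      mn n ≤ ∑ i ∈ S, w i * (P₀ ^ n) i k := by
    intro n w hw hw1
    calc mn n = ∑ i ∈ S, w i * mn n := by rw [← Finset.sum_mul, hw1, one_mul]
      _ ≤ ∑ i ∈ S, w i * (P₀ ^ n) i k := by
          apply Finset.sum_le_sum
          intro i hi
          exact mul_le_mul_of_nonneg_left (hlb n i hi) (hw i hi)
  -- π between mn and Mx
  have hπub : ∀ n, π k ≤ Mx n := by
    intro n
    rw [← stat_pow n k hk]
    exact convex_ub n π (fun i _ => hπnn i) hπsum
  have hπlb : ∀ n, mn n ≤ π k := by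
    intro n
    rw [← stat_pow n k hk]
    exact convex_lb n π (fun i _ => hπnn i) hπsum
  -- monotonicity of Mx, mn in steps of arbitrary size a
  have hMxmono : ∀ (a n : ℕ), Mx (a + n) ≤ Mx n := by
    intro a n
    rw [hMx]
    apply Finset.sup'_le
    intro r' hr'
    rw [entry a n r' hr']
    exact convex_ub n (fun i => (P₀ ^ a) r' i)
      (fun i _ => nonneg_pow' P₀ hnn a r' i) (rowS a r' hr')
  have hmnmono : ∀ (a n : ℕ), mn n ≤ mn (a + n) := by
    intro a n
    rw [hmn]
    apply Finset.le_inf'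
    intro r' hr'
    rw [entry a n r' hr']
    exact convex_lb n (fun i => (P₀ ^ a) r' i)
      (fun i _ => nonneg_pow' P₀ hnn a r' i) (rowS a r' hr')
  -- delta
  set δ : ℝ := (S ×ˢ S).inf' (hSne.product hSne)
    (fun p => ∑ i ∈ S, min ((P₀ ^ N) p.1 i) ((P₀ ^ N) p.2 i)) with hδ
  have hδpos : 0 < δ := by
    rw [hδ, Finset.lt_inf'_iff]
    intro p hp
    rw [Finset.mem_product] at hp
    exact hQ p.1 hp.1 p.2 hp.2
  have hδle1 : δ ≤ 1 := by
    obtain ⟨r₀, hr₀⟩ := hSne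
    have hmem : (r₀, r₀) ∈ S ×ˢ S := Finset.mem_product.mpr ⟨hr₀, hr₀⟩
    have h := Finset.inf'_le (s := S ×ˢ S)
      (fun p : Fin m × Fin m => ∑ i ∈ S, min ((P₀ ^ N) p.1 i) ((P₀ ^ N) p.2 i))
      hmem
    simp only [min_self] at h
    rw [rowS N r₀ hr₀] at h
    exact hδ ▸ h
  -- the diameter
  set Dm : ℕ → ℝ := fun n => Mx n - mn n with hDm
  have hDnn : ∀ n, 0 ≤ Dm n := by
    intro n
    obtain ⟨r₀, hr₀⟩ := hSne
    have := le_trans (hlb n r₀ hr₀) (hub n r₀ hr₀)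
    simp only [hDm]; linarith
  have hD0 : Dm 0 ≤ 1 := by
    have h1 : Mx 0 ≤ 1 := by
      apply Finset.sup'_le
      intro r' _
      by_cases hrk : r' = k <;> simp [pow_zero, Matrix.one_apply, hrk]
    have h2 : 0 ≤ mn 0 := by
      apply Finset.le_inf'
      intro r' _
      exact nonneg_pow' P₀ hnn 0 r' k
    simp only [hDm]; linarith
  -- contraction
  have hcontr : ∀ n, Dm (N + n) ≤ (1 - δ) * Dm n := by
    intro n
    obtain ⟨r₀, hr₀, hMeq⟩ := Finset.exists_mem_eq_sup' hSne (fun r => (P₀ ^ (N + n)) r k)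
    obtain ⟨r₁, hr₁, hmeq⟩ := Finset.exists_mem_eq_inf' hSne (fun r => (P₀ ^ (N + n)) r k)
    set a : Fin m → ℝ := fun i => (P₀ ^ N) r₀ i
    set b : Fin m → ℝ := fun i => (P₀ ^ N) r₁ i
    set c : Fin m → ℝ := fun i => (P₀ ^ n) i k
    set μ : Fin m → ℝ := fun i => min (a i) (b i)
    have ha1 : ∑ i ∈ S, a i = 1 := rowS N r₀ hr₀
    have hb1 : ∑ i ∈ S, b i = 1 := rowS N r₁ hr₁
    have hQδ : δ ≤ ∑ i ∈ S, μ i := by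
      have hmem : (r₀, r₁) ∈ S ×ˢ S := Finset.mem_product.mpr ⟨hr₀, hr₁⟩
      have h := Finset.inf'_le (s := S ×ˢ S)
        (fun p : Fin m × Fin m => ∑ i ∈ S, min ((P₀ ^ N) p.1 i) ((P₀ ^ N) p.2 i))
        hmem
      exact hδ ▸ h
    have haμ : ∀ i, 0 ≤ a i - μ i := fun i => by simp [μ]
    have hbμ : ∀ i, 0 ≤ b i - μ i := fun i => by simp [μ]
    have key : (P₀ ^ (N + n)) r₀ k - (P₀ ^ (N + n)) r₁ k ≤ (1 - δ) * Dm n := by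
      rw [entry N n r₀ hr₀, entry N n r₁ hr₁]
      have e1 : ∑ i ∈ S, a i * c i - ∑ i ∈ S, b i * c i
          = ∑ i ∈ S, (a i - μ i) * c i - ∑ i ∈ S, (b i - μ i) * c i := by
        rw [← Finset.sum_sub_distrib, ← Finset.sum_sub_distrib]
        apply Finset.sum_congr rfl; intro i _; ring
      rw [e1]
      have e2 : ∑ i ∈ S, (a i - μ i) * c i ≤ (1 - ∑ i ∈ S, μ i) * Mx n := by
        calc ∑ i ∈ S, (a i - μ i) * c i ≤ ∑ i ∈ S, (a i - μ i) * Mx n := by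
              apply Finset.sum_le_sum
              intro i hi
              exact mul_le_mul_of_nonneg_left (hub n i hi) (haμ i)
          _ = (1 - ∑ i ∈ S, μ i) * Mx n := by
              rw [← Finset.sum_mul, Finset.sum_sub_distrib, ha1]
      have e3 : (1 - ∑ i ∈ S, μ i) * mn n ≤ ∑ i ∈ S, (b i - μ i) * c i := by
        calc (1 - ∑ i ∈ S, μ i) * mn n = ∑ i ∈ S, (b i - μ i) * mn n := by
              rw [← Finset.sum_mul, Finset.sum_sub_distrib, hb1]
          _ ≤ ∑ i ∈ S, (b i - μ i) * c i := by
              apply Finset.sum_le_sum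
              intro i hi
              exact mul_le_mul_of_nonneg_left (hlb n i hi) (hbμ i)
      have hμ1 : 1 - ∑ i ∈ S, μ i ≤ 1 - δ := by linarith
      have hμnn : 0 ≤ 1 - ∑ i ∈ S, μ i := by
        have : ∑ i ∈ S, μ i ≤ ∑ i ∈ S, a i :=
          Finset.sum_le_sum (fun i _ => min_le_left _ _)
        rw [ha1] at this; linarith
      have hDn := hDnn n
      have hmono : (1 - ∑ i ∈ S, μ i) * Dm n ≤ (1 - δ) * Dm n :=
        mul_le_mul_of_nonneg_right hμ1 hDn
      simp only [hDm] at *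
      nlinarith [e2, e3]
    calc Dm (N + n) = (P₀ ^ (N + n)) r₀ k - (P₀ ^ (N + n)) r₁ k := by
          simp only [hDm, hMx, hmn]; rw [hMeq, hmeq]
      _ ≤ (1 - δ) * Dm n := key
  -- iterate: Dm (q * N) ≤ (1-δ)^q
  have hiter : ∀ q : ℕ, Dm (q * N) ≤ (1 - δ)^q := by
    intro q
    induction q with
    | zero => simpa using hD0
    | succ q ih =>
        have : Dm ((q+1) * N) = Dm (N + q * N) := by ring_nf
        rw [this]
        calc Dm (N + q * N) ≤ (1 - δ) * Dm (q * N) := hcontr (q * N)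
          _ ≤ (1 - δ) * (1 - δ)^q := by
              apply mul_le_mul_of_nonneg_left ih (by linarith)
          _ = (1 - δ)^(q+1) := by ring
  -- antitone
  have hanti : ∀ n n', n ≤ n' → Dm n' ≤ Dm n := by
    intro n n' hnn'
    obtain ⟨a, rfl⟩ := Nat.exists_eq_add_of_le hnn'
    have h1 := hMxmono a n
    have h2 := hmnmono a n
    simp only [hDm]
    have e : n + a = a + n := by ring
    rw [e]
    linarith
  -- Dm n ≤ (1-δ)^(n / N)
  have hbound : ∀ n, Dm n ≤ (1 - δ)^(n / N) := by
    intro n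
    calc Dm n ≤ Dm ((n / N) * N) := hanti _ _ (Nat.div_mul_le_self n N)
      _ ≤ (1 - δ)^(n / N) := hiter _
  -- Dm → 0
  have hdiv : Tendsto (fun n : ℕ => n / N) atTop atTop := by
    apply tendsto_atTop_atTop.mpr
    intro bb
    exact ⟨bb * N, fun a ha => (Nat.le_div_iff_mul_le (by omega)).mpr ha⟩
  have hpow0 : Tendsto (fun n : ℕ => (1 - δ)^(n / N)) atTop (nhds 0) :=
    (tendsto_pow_atTop_nhds_zero_of_lt_one (by linarith) (by linarith)).comp hdiv
  have hD0' : Tendsto Dm atTop (nhds 0) :=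
    squeeze_zero hDnn hbound hpow0
  -- final squeeze
  have hlow : ∀ n, π k - Dm n ≤ (P₀ ^ n) r k := by
    intro n
    have := hπub n
    have := hlb n r hr
    simp only [hDm] at *; linarith
  have hhigh : ∀ n, (P₀ ^ n) r k ≤ π k + Dm n := by
    intro n
    have := hπlb n
    have := hub n r hr
    simp only [hDm] at *; linarith
  have hc : Tendsto (fun _ : ℕ => π k) atTop (nhds (π k)) := tendsto_const_nhds
  have h1 : Tendsto (fun n => π k - Dm n) atTop (nhds (π k)) := by
    simpa using hc.sub hD0'
  have h2 : Tendsto (fun n => π k + Dm n) atTop (nhds (π k)) := by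
    simpa using hc.add hD0'
  exact tendsto_of_tendsto_of_tendsto_of_le_of_le h1 h2 hlow hhigh


private lemma pow_tendsto (n : ℝ → ℕ) (t : ℝ)
    (hnt : Tendsto (fun ε : ℝ => ε * (n ε : ℝ)) (nhdsWithin 0 (Set.Ioi 0)) (nhds t)) :
    Tendsto (fun ε : ℝ => (1-ε)^(n ε)) (nhdsWithin 0 (Set.Ioi 0))
      (nhds (Real.exp (-t))) := by
  have hderiv : HasDerivAt (fun x : ℝ => Real.log (1 - x)) (-1) 0 := by
    have h1 : HasDerivAt (fun x : ℝ => 1 - x) (-1) 0 := by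
      simpa using (hasDerivAt_id (0:ℝ)).const_sub 1
    have h2 := (Real.hasDerivAt_log (by norm_num : (1:ℝ) - 0 ≠ 0)).comp 0 h1
    simp at h2; exact h2
  have hslope : Tendsto (fun ε : ℝ => Real.log (1 - ε) / ε)
      (nhdsWithin 0 (Set.Ioi 0)) (nhds (-1)) := by
    have h0 := hasDerivAt_iff_tendsto_slope.mp hderiv
    have h3 : Tendsto (slope (fun x : ℝ => Real.log (1 - x)) 0)
        (nhdsWithin 0 (Set.Ioi 0)) (nhds (-1)) :=
      h0.mono_left (nhdsWithin_mono 0 (fun x hx => ne_of_gt hx))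
    refine h3.congr (fun ε => ?_)
    simp [slope_def_field]
  have hmul : Tendsto (fun ε : ℝ => (ε * (n ε : ℝ)) * (Real.log (1 - ε) / ε))
      (nhdsWithin 0 (Set.Ioi 0)) (nhds (t * (-1))) := hnt.mul hslope
  have hmul' : Tendsto (fun ε : ℝ => (n ε : ℝ) * Real.log (1 - ε))
      (nhdsWithin 0 (Set.Ioi 0)) (nhds (-t)) := by
    rw [show t * (-1) = -t by ring] at hmul
    refine hmul.congr' ?_
    filter_upwards [self_mem_nhdsWithin] with ε hε
    have hε0 : ε ≠ 0 := ne_of_gt hε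
    field_simp
  have hexp : Tendsto (fun ε : ℝ => Real.exp ((n ε : ℝ) * Real.log (1 - ε)))
      (nhdsWithin 0 (Set.Ioi 0)) (nhds (Real.exp (-t))) :=
    (Real.continuous_exp.tendsto _).comp hmul'
  refine hexp.congr' ?_
  have h1 : ∀ᶠ ε : ℝ in nhdsWithin 0 (Set.Ioi 0), ε < 1 :=
    eventually_nhdsWithin_of_eventually_nhds (eventually_lt_nhds (by norm_num))
  filter_upwards [h1] with ε hε1
  have hpos : 0 < 1 - ε := by linarith
  rw [Real.exp_nat_mul, Real.exp_log hpos]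

private lemma remainder_tendsto (n : ℝ → ℕ) (A : ℕ → ℝ) (a : ℝ)
    (hA : Tendsto A atTop (nhds a)) (M : ℝ) (hM : ∀ l, |A l - a| ≤ M) :
    Tendsto (fun ε : ℝ => ∑ l ∈ Finset.range (n ε), ε * (1-ε)^l * (A l - a))
      (nhdsWithin 0 (Set.Ioi 0)) (nhds 0) := by
  have hM0 : 0 ≤ M := le_trans (abs_nonneg _) (hM 0)
  rw [Metric.tendsto_nhds]
  intro η hη
  obtain ⟨L, hL⟩ := (Metric.tendsto_atTop.mp hA) (η/2) (by linarith)
  have hsmall : ∀ᶠ ε : ℝ in nhdsWithin 0 (Set.Ioi 0),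
      ε < min 1 (η / (2 * (L * M + 1))) := by
    apply eventually_nhdsWithin_of_eventually_nhds
    apply eventually_lt_nhds
    apply lt_min one_pos
    positivity
  filter_upwards [hsmall, self_mem_nhdsWithin] with ε hεs hεpos
  have hε0 : (0:ℝ) < ε := hεpos
  have hε1 : ε < 1 := lt_of_lt_of_le hεs (min_le_left _ _)
  have hε2 : ε < η / (2 * (L * M + 1)) := lt_of_lt_of_le hεs (min_le_right _ _)
  have h1ε : 0 ≤ 1 - ε := by linarith
  rw [Real.dist_eq, sub_zero]
  set nε := n ε
  have key : |∑ l ∈ Finset.range nε, ε * (1-ε)^l * (A l - a)| ≤ ε * (L * M) + η/2 := by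
    calc |∑ l ∈ Finset.range nε, ε * (1-ε)^l * (A l - a)|
        ≤ ∑ l ∈ Finset.range nε, |ε * (1-ε)^l * (A l - a)| :=
          Finset.abs_sum_le_sum_abs _ _
      _ ≤ ∑ l ∈ Finset.range nε,
            ((if l < L then ε * M else 0) + (η/2) * (ε * (1-ε)^l)) := by
          apply Finset.sum_le_sum
          intro l _
          have hpl : (0:ℝ) ≤ (1-ε)^l := pow_nonneg h1ε l
          have hpl1 : (1-ε)^l ≤ 1 := pow_le_one₀ h1ε (by linarith)
          rw [abs_mul, abs_mul, abs_of_pos hεpos, abs_of_nonneg hpl]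
          by_cases hl : l < L
          · have h1 : ε * (1-ε)^l * |A l - a| ≤ ε * M := by
              calc ε * (1-ε)^l * |A l - a| ≤ (ε * 1) * M := by
                    apply mul_le_mul (mul_le_mul_of_nonneg_left hpl1 hε0.le) (hM l)
                      (abs_nonneg _) (by linarith)
                _ = ε * M := by ring
            have h2 : (0:ℝ) ≤ (η/2) * (ε * (1-ε)^l) :=
              mul_nonneg (by linarith) (mul_nonneg hε0.le hpl)
            rw [if_pos hl]; linarith
          · push_neg at hl
            have hAl : |A l - a| ≤ η/2 := by
              have := hL l hl
              rw [Real.dist_eq] at this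
              linarith
            rw [if_neg (by omega)]
            have h1 : ε * (1-ε)^l * |A l - a| ≤ ε * (1-ε)^l * (η/2) :=
              mul_le_mul_of_nonneg_left hAl (mul_nonneg hε0.le hpl)
            have h2 : ε * (1-ε)^l * (η/2) = (η/2) * (ε * (1-ε)^l) := by ring
            linarith
      _ = (∑ l ∈ Finset.range nε, (if l < L then ε * M else 0))
            + (η/2) * ∑ l ∈ Finset.range nε, ε * (1-ε)^l := by
          rw [Finset.sum_add_distrib, Finset.mul_sum]
      _ ≤ ε * (L * M) + η/2 := by
          have hsum1 : (∑ l ∈ Finset.range nε, (if l < L then ε * M else 0))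
              ≤ ε * (L * M) := by
            have hsub : ∑ l ∈ Finset.range nε, (if l < L then ε * M else 0)
                ≤ ∑ l ∈ Finset.range nε ∪ Finset.range L, (if l < L then ε * M else 0) := by
              apply Finset.sum_le_sum_of_subset_of_nonneg Finset.subset_union_left
              intro l _ _
              split
              · exact mul_nonneg hε0.le hM0
              · exact le_rfl
            have heq : ∑ l ∈ Finset.range nε ∪ Finset.range L, (if l < L then ε * M else 0)
                = ∑ l ∈ Finset.range L, (if l < L then ε * M else 0) := by
              apply (Finset.sum_subset Finset.subset_union_right ?_).symm
              intro l _ hl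
              rw [Finset.mem_range] at hl
              push_neg at hl
              rw [if_neg (by omega)]
            rw [heq, Finset.sum_ite_of_true (fun l hl => Finset.mem_range.mp hl),
              Finset.sum_const, Finset.card_range] at hsub
            calc _ ≤ ((L : ℝ)) * (ε * M) := by simpa [nsmul_eq_mul] using hsub
              _ = ε * ((L:ℝ) * M) := by ring
          have hgeom : ∑ l ∈ Finset.range nε, ε * (1-ε)^l ≤ 1 := by
            rw [← Finset.mul_sum, geom_sum_eq (by intro hc; linarith : (1:ℝ) - ε ≠ 1)]
            have hpow : 0 ≤ (1-ε)^nε := pow_nonneg h1ε nε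
            rw [show (1 - ε - 1 : ℝ) = -ε by ring]
            rw [show ε * (((1-ε)^nε - 1)/(-ε)) = 1 - (1-ε)^nε from by
              rw [div_neg, mul_neg, mul_div_assoc', mul_div_cancel_left₀ _ (ne_of_gt hε0)]
              ring]
            linarith
          have : (η/2) * ∑ l ∈ Finset.range nε, ε * (1-ε)^l ≤ η/2 := by
            nlinarith [Finset.sum_nonneg (fun l (_ : l ∈ Finset.range nε) =>
              mul_nonneg hεpos.le (pow_nonneg h1ε l))]
          linarith
  have hfinal : ε * ((L:ℝ) * M) < η/2 := by
    have hden : (0:ℝ) < 2 * ((L:ℝ) * M + 1) := by positivity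
    have h4 := (lt_div_iff₀ hden).mp hε2
    nlinarith [hε0, mul_nonneg (Nat.cast_nonneg L : (0:ℝ) ≤ L) hM0]
  calc |∑ l ∈ Finset.range nε, ε * (1-ε)^l * (A l - a)| ≤ ε * ((L:ℝ) * M) + η/2 := key
    _ < η := by linarith

private lemma geom_id (ε : ℝ) (hε : ε ≠ 0) (n : ℕ) :
    ∑ l ∈ Finset.range n, ε * (1-ε)^l = 1 - (1-ε)^n := by
  rw [← Finset.mul_sum, geom_sum_eq (by intro hc; apply hε; linarith : (1:ℝ) - ε ≠ 1),
    show (1 - ε - 1 : ℝ) = -ε by ring, div_neg, mul_neg, mul_div_assoc',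
    mul_div_cancel_left₀ _ hε]
  ring

private lemma limit_lemma (n : ℝ → ℕ)
    (hn : Tendsto n (nhdsWithin 0 (Set.Ioi 0)) atTop)
    (t : ℝ)
    (hnt : Tendsto (fun ε : ℝ => ε * (n ε : ℝ)) (nhdsWithin 0 (Set.Ioi 0)) (nhds t))
    (A B : ℕ → ℝ) (a b : ℝ)
    (hA : Tendsto A atTop (nhds a)) (hB : Tendsto B atTop (nhds b))
    (M : ℝ) (hM : ∀ l, |A l - a| ≤ M) :
    Tendsto (fun ε : ℝ => (1-ε)^(n ε) * B (n ε)
        + ∑ l ∈ Finset.range (n ε), ε * (1-ε)^l * A l)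
      (nhdsWithin 0 (Set.Ioi 0))
      (nhds (b * Real.exp (-t) + a * (1 - Real.exp (-t)))) := by
  have hpow := pow_tendsto n t hnt
  have h1 : Tendsto (fun ε : ℝ => (1-ε)^(n ε) * B (n ε)) (nhdsWithin 0 (Set.Ioi 0))
      (nhds (Real.exp (-t) * b)) := hpow.mul (hB.comp hn)
  have h2 : Tendsto (fun ε : ℝ => a * (1 - (1-ε)^(n ε))) (nhdsWithin 0 (Set.Ioi 0))
      (nhds (a * (1 - Real.exp (-t)))) :=
    tendsto_const_nhds.mul (tendsto_const_nhds.sub hpow)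
  have h3 := remainder_tendsto n A a hA M hM
  have h4 : Tendsto (fun ε : ℝ => a * (1 - (1-ε)^(n ε))
      + ∑ l ∈ Finset.range (n ε), ε * (1-ε)^l * (A l - a))
      (nhdsWithin 0 (Set.Ioi 0)) (nhds (a * (1 - Real.exp (-t)))) := by
    have := h2.add h3
    rwa [add_zero] at this
  have h5 : Tendsto (fun ε : ℝ => ∑ l ∈ Finset.range (n ε), ε * (1-ε)^l * A l)
      (nhdsWithin 0 (Set.Ioi 0)) (nhds (a * (1 - Real.exp (-t)))) := by
    refine h4.congr' ?_
    filter_upwards [self_mem_nhdsWithin] with ε hε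
    have hε0 : ε ≠ 0 := ne_of_gt hε
    have : ∑ l ∈ Finset.range (n ε), ε * (1-ε)^l * A l
        = ∑ l ∈ Finset.range (n ε), (ε * (1-ε)^l * a + ε * (1-ε)^l * (A l - a)) := by
      apply Finset.sum_congr rfl; intro l _; ring
    rw [this, Finset.sum_add_distrib, ← Finset.sum_mul, geom_id ε hε0]
    ring
  have := h1.add h5
  convert this using 2
  ring


/-- triangular-array ergodic theorem in the singular case. The phase space
splits into `h` disjoint nonempty closed classes `C j`, each exponentially ergodic for `P₀`
(for some `N ≥ 1` the class-wise ergodicity coefficient satisfies `Δ^{(j)}_N(P₀) < 1`,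
i.e. `Q^{(j)}_N(P₀) = min_{r,k ∈ C j} ∑_{i ∈ C j} min((P₀^N)_{ri}, (P₀^N)_{ki}) > 0`),
with class stationary distribution `π₀^{(j)}`. With `P_ε = (1-ε) P₀ + ε D`, `D` having
identical rows equal to the positive probability vector `d`: if `n_ε → ∞` and
`ε n_ε → t ∈ (0,∞)` as `ε → 0+`, then for `k ∈ C j`,
`p_{ε,p̄,k}(n_ε) → π_{0,p̄,k} e^{-t} + π_{0,d̄,k} (1 - e^{-t})` as `ε → 0+`,
where `π_{0,p̄,k} = f^{(j)}_p π₀^{(j)}_k`, `π_{0,d̄,k} = f^{(j)}_d π₀^{(j)}_k`. -/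
theorem stmt19 {m h : ℕ}
    (P₀ D : Matrix (Fin m) (Fin m) ℝ)
    (hP₀nonneg : ∀ i j, 0 ≤ P₀ i j) (hP₀row : ∀ i, ∑ j, P₀ i j = 1)
    (d : Fin m → ℝ) (hd : ∀ i, 0 < d i) (hdsum : ∑ i, d i = 1)
    (hD : ∀ i j, D i j = d j)
    (C : Fin h → Finset (Fin m))
    (hCne : ∀ j, (C j).Nonempty)
    (hCdisj : ∀ j j', j ≠ j' → Disjoint (C j) (C j'))
    (hCcover : ∀ i, ∃ j, i ∈ C j)
    (hCclosed : ∀ j, ∀ i ∈ C j, ∀ k, k ∉ C j → P₀ i k = 0)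
    (hΔ : ∀ j, ∃ N : ℕ, 1 ≤ N ∧ ∀ r ∈ C j, ∀ k ∈ C j,
      0 < ∑ i ∈ C j, min ((P₀ ^ N) r i) ((P₀ ^ N) k i))
    (π₀ : Fin h → Fin m → ℝ)
    (hπ₀nonneg : ∀ j k, 0 ≤ π₀ j k)
    (hπ₀sum : ∀ j, ∑ k ∈ C j, π₀ j k = 1)
    (hπ₀stat : ∀ j, ∀ k ∈ C j, ∑ r ∈ C j, π₀ j r * P₀ r k = π₀ j k)
    (p : Fin m → ℝ) (hpnonneg : ∀ i, 0 ≤ p i) (hpsum : ∑ i, p i = 1)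
    (n : ℝ → ℕ) (hn : Tendsto n (nhdsWithin 0 (Set.Ioi 0)) atTop)
    (t : ℝ) (ht : 0 < t)
    (hnt : Tendsto (fun ε : ℝ => ε * (n ε : ℝ)) (nhdsWithin 0 (Set.Ioi 0)) (nhds t))
    (j : Fin h) (k : Fin m) (hk : k ∈ C j) :
    Tendsto (fun ε : ℝ => ∑ i, p i * (((1 - ε) • P₀ + ε • D) ^ (n ε)) i k)
      (nhdsWithin 0 (Set.Ioi 0))
      (nhds ((∑ i ∈ C j, p i) * π₀ j k * Real.exp (-t)
        + (∑ i ∈ C j, d i) * π₀ j k * (1 - Real.exp (-t)))) := by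
  obtain ⟨N, hN1, hQ⟩ := hΔ j
  set S := C j with hS
  -- off-class states give zero entries towards k
  have hoff : ∀ (l : ℕ) (i : Fin m), i ∉ S → (P₀ ^ l) i k = 0 := by
    intro l i hi
    obtain ⟨j', hj'⟩ := hCcover i
    have hjj : j' ≠ j := fun e => hi (show i ∈ S from by rw [hS, ← e]; exact hj')
    have hkj' : k ∉ C j' := fun hkk => (Finset.disjoint_left.mp (hCdisj j' j hjj) hkk) hk
    exact closed_pow' P₀ (C j') (hCclosed j') l i hj' k hkj'
  have herg : ∀ r ∈ S, Tendsto (fun n : ℕ => (P₀ ^ n) r k) atTop (nhds (π₀ j k)) :=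
    fun r hr => ergodic P₀ hP₀nonneg hP₀row S (hCne j) (hCclosed j) N hN1 hQ
      (π₀ j) (hπ₀nonneg j) (hπ₀sum j) (hπ₀stat j) k hk r hr
  set A : ℕ → ℝ := fun l => ∑ i, d i * (P₀ ^ l) i k with hA
  set B : ℕ → ℝ := fun n => ∑ i, p i * (P₀ ^ n) i k with hB
  have hAeq : ∀ l, A l = ∑ i ∈ S, d i * (P₀ ^ l) i k := by
    intro l
    exact (Finset.sum_subset (Finset.subset_univ S)
      (fun x _ hx => by rw [hoff l x hx, mul_zero])).symm
  have hBeq : ∀ l, B l = ∑ i ∈ S, p i * (P₀ ^ l) i k := by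
    intro l
    exact (Finset.sum_subset (Finset.subset_univ S)
      (fun x _ hx => by rw [hoff l x hx, mul_zero])).symm
  set a : ℝ := (∑ i ∈ S, d i) * π₀ j k with ha
  set b : ℝ := (∑ i ∈ S, p i) * π₀ j k with hb
  have hAlim : Tendsto A atTop (nhds a) := by
    have h1 : Tendsto (fun l => ∑ i ∈ S, d i * (P₀ ^ l) i k) atTop
        (nhds (∑ i ∈ S, d i * π₀ j k)) := by
      apply tendsto_finset_sum
      intro i hi
      exact (herg i hi).const_mul (d i)
    rw [← Finset.sum_mul] at h1
    exact h1.congr (fun l => (hAeq l).symm)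
  have hBlim : Tendsto B atTop (nhds b) := by
    have h1 : Tendsto (fun l => ∑ i ∈ S, p i * (P₀ ^ l) i k) atTop
        (nhds (∑ i ∈ S, p i * π₀ j k)) := by
      apply tendsto_finset_sum
      intro i hi
      exact (herg i hi).const_mul (p i)
    rw [← Finset.sum_mul] at h1
    exact h1.congr (fun l => (hBeq l).symm)
  have hle1 : ∀ (l : ℕ) (i : Fin m), (P₀ ^ l) i k ≤ 1 := by
    intro l i
    calc (P₀ ^ l) i k ≤ ∑ j', (P₀ ^ l) i j' :=
          Finset.single_le_sum (fun j' _ => nonneg_pow' P₀ hP₀nonneg l i j')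
            (Finset.mem_univ k)
      _ = 1 := rowsum_pow' P₀ hP₀row l i
  have hAbd : ∀ l, |A l - a| ≤ 1 + |a| := by
    intro l
    have h0 : 0 ≤ A l := Finset.sum_nonneg fun i _ =>
      mul_nonneg (hd i).le (nonneg_pow' P₀ hP₀nonneg l i k)
    have h1 : A l ≤ 1 := by
      calc A l ≤ ∑ i, d i * 1 := Finset.sum_le_sum fun i _ =>
            mul_le_mul_of_nonneg_left (hle1 l i) (hd i).le
        _ = 1 := by simp [hdsum]
    calc |A l - a| ≤ |A l| + |a| := abs_sub _ _
      _ ≤ 1 + |a| := by rw [abs_of_nonneg h0]; linarith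
  have hmain := limit_lemma n hn t hnt A B a b hAlim hBlim (1 + |a|) hAbd
  refine hmain.congr (fun ε => ?_)
  rw [keyIdentity P₀ D hP₀row d hdsum hD p hpsum ε (n ε) k]
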